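/- arXiv:1411.5562 — 4 statements merged into one kernel-verified Lean document; each statement's English description precedes it below -/
import Mathlib

section
/- Let U be a Banach space, (u_n) a convergent sequence in U, and (A_n) a sequence of bounded linear operators on U such that there exists c < 1 with ‖A_n u‖ ≤ c‖u‖ for all u ∈ U and all n, and such that for every u ∈ U the sequence (A_n u) converges in U. If (v_n) is a sequence in U satisfying v_{n+1} = A_n v_n + u_n for all n, then (v_n) converges in U. -/
open Filter

lemma aux_rec_tendsto_zero (a δ : ℕ → ℝ) (c : ℝ) (hc0 : 0 ≤ c) (hc1 : c < 1)
    (ha : ∀ n, 0 ≤ a n) (hδ : Tendsto δ atTop (nhds 0))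
    (hrec : ∀ n, a (n + 1) ≤ c * a n + δ n) :
    Tendsto a atTop (nhds 0) := by
  rw [Metric.tendsto_atTop]
  intro ε hε
  have h1c : 0 < 1 - c := by linarith
  set ε' := ε * (1 - c) / 2 with hε'def
  have hε' : 0 < ε' := by positivity
  obtain ⟨N, hN⟩ := (Metric.tendsto_atTop.mp hδ) ε' hε'
  have hδle : ∀ n, N ≤ n → δ n ≤ ε' := by
    intro n hn
    have := hN n hn
    rw [Real.dist_eq, sub_zero] at this
    exact le_of_lt (lt_of_abs_lt this)
  have hhalf : ε' / (1 - c) = ε / 2 := by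
    field_simp [hε'def]
    ring
  have key : ∀ k, a (N + k) ≤ c ^ k * a N + ε' / (1 - c) := by
    intro k
    induction k with
    | zero =>
      have : 0 ≤ ε' / (1 - c) := div_nonneg hε'.le h1c.le
      simpa using by linarith [ha N]
    | succ k ih =>
      have h1 := hrec (N + k)
      have h2 : c * a (N + k) ≤ c * (c ^ k * a N + ε' / (1 - c)) :=
        mul_le_mul_of_nonneg_left ih hc0
      have h3 : δ (N + k) ≤ ε' := hδle _ (Nat.le_add_right N k)
      have h4 : a (N + (k + 1)) ≤ c * (c ^ k * a N + ε' / (1 - c)) + ε' := by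
        have : N + (k + 1) = (N + k) + 1 := by ring
        rw [this]; linarith
      have h5 : c * (c ^ k * a N + ε' / (1 - c)) + ε'
          = c ^ (k + 1) * a N + ε' / (1 - c) := by
        field_simp
        ring
      linarith
  have hpow : Tendsto (fun k => c ^ k * a N) atTop (nhds 0) := by
    simpa using (tendsto_pow_atTop_nhds_zero_of_lt_one hc0 hc1).mul_const (a N)
  obtain ⟨K, hK⟩ := (Metric.tendsto_atTop.mp hpow) (ε / 2) (by linarith)
  refine ⟨N + K, fun n hn => ?_⟩
  have hNn : N ≤ n := le_trans (Nat.le_add_right N K) hn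
  obtain ⟨m, rfl⟩ := Nat.exists_eq_add_of_le hNn
  have hmK : K ≤ m := by omega
  have hpK := hK m hmK
  rw [Real.dist_eq, sub_zero] at hpK
  have hcm : 0 ≤ c ^ m * a N := mul_nonneg (pow_nonneg hc0 m) (ha N)
  rw [abs_of_nonneg hcm] at hpK
  rw [Real.dist_eq, sub_zero, abs_of_nonneg (ha _)]
  have := key m
  linarith [hhalf ▸ this]

/-- Linear fiber contraction principle (Lemma A.1). -/
theorem stmt_0 {U : Type*} [NormedAddCommGroup U] [NormedSpace ℝ U] [CompleteSpace U]
    (u v : ℕ → U) (A : ℕ → U →L[ℝ] U) (c : ℝ) (hc : c < 1)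
    (hu : ∃ l, Tendsto u atTop (nhds l))
    (hA : ∀ n x, ‖A n x‖ ≤ c * ‖x‖)
    (hAconv : ∀ x : U, ∃ y, Tendsto (fun n => A n x) atTop (nhds y))
    (hv : ∀ n, v (n + 1) = A n (v n) + u n) :
    ∃ w, Tendsto v atTop (nhds w) := by
  obtain ⟨l, hl⟩ := hu
  set c' : ℝ := max c 0 with hc'def
  have hc'0 : 0 ≤ c' := le_max_right _ _
  have hc'1 : c' < 1 := max_lt hc one_pos
  have hA' : ∀ n x, ‖A n x‖ ≤ c' * ‖x‖ := fun n x =>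
    (hA n x).trans (mul_le_mul_of_nonneg_right (le_max_left _ _) (norm_nonneg x))
  -- pointwise limit map
  set f : U → U := fun x => Classical.choose (hAconv x) with hfdef
  have hf : ∀ x, Tendsto (fun n => A n x) atTop (nhds (f x)) := fun x =>
    Classical.choose_spec (hAconv x)
  have hflip : ∀ x y, ‖f x - f y‖ ≤ c' * ‖x - y‖ := by
    intro x y
    have h1 : Tendsto (fun n => A n x - A n y) atTop (nhds (f x - f y)) :=
      (hf x).sub (hf y)
    have h2 : Tendsto (fun n => ‖A n x - A n y‖) atTop (nhds ‖f x - f y‖) :=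
      h1.norm
    refine le_of_tendsto h2 (Eventually.of_forall fun n => ?_)
    calc ‖A n x - A n y‖ = ‖A n (x - y)‖ := by rw [map_sub]
      _ ≤ c' * ‖x - y‖ := hA' n _
  -- the map T x = f x + l is a contraction
  set T : U → U := fun x => f x + l with hTdef
  have hT : ContractingWith c'.toNNReal T := by
    constructor
    · exact_mod_cast Real.toNNReal_lt_one.mpr hc'1
    · refine LipschitzWith.of_dist_le_mul fun x y => ?_
      simp only [hTdef, dist_eq_norm, add_sub_add_right_eq_sub]
      calc ‖f x - f y‖ ≤ c' * ‖x - y‖ := hflip x y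
        _ = (c'.toNNReal : ℝ) * ‖x - y‖ := by rw [Real.coe_toNNReal _ hc'0]
  have : Nonempty U := ⟨0⟩
  set w : U := hT.fixedPoint T with hwdef
  have hw : T w = w := hT.fixedPoint_isFixedPt
  have hwq : f w + l = w := hw
  -- error sequence
  set δ : ℕ → ℝ := fun n => ‖A n w - f w‖ + ‖u n - l‖ with hδdef
  have hδ : Tendsto δ atTop (nhds 0) := by
    have h1 : Tendsto (fun n => ‖A n w - f w‖) atTop (nhds 0) := by
      have := ((hf w).sub_const (f w)).norm
      simpa using this
    have h2 : Tendsto (fun n => ‖u n - l‖) atTop (nhds 0) := by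
      have := (hl.sub_const l).norm
      simpa using this
    simpa using h1.add h2
  have hrec : ∀ n, ‖v (n + 1) - w‖ ≤ c' * ‖v n - w‖ + δ n := by
    intro n
    have heq : v (n + 1) - w = A n (v n - w) + ((A n w - f w) + (u n - l)) := by
      have h5 : A n (v n - w) + ((A n w - f w) + (u n - l))
          = A n (v n) + u n - (f w + l) := by
        rw [map_sub]; abel
      rw [hwq] at h5
      rw [hv n, ← h5]
    rw [heq]
    calc ‖A n (v n - w) + ((A n w - f w) + (u n - l))‖
        ≤ ‖A n (v n - w)‖ + ‖(A n w - f w) + (u n - l)‖ := norm_add_le _ _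
      _ ≤ c' * ‖v n - w‖ + (‖A n w - f w‖ + ‖u n - l‖) := by
          gcongr
          · exact hA' n _
          · exact norm_add_le _ _
  have hzero : Tendsto (fun n => ‖v n - w‖) atTop (nhds 0) :=
    aux_rec_tendsto_zero _ δ c' hc'0 hc'1 (fun n => norm_nonneg _) hδ hrec
  refine ⟨w, ?_⟩
  rw [← tendsto_sub_nhds_zero_iff]
  exact tendsto_zero_iff_norm_tendsto_zero.mpr hzero
end

section
/- Let X be a Banach space and A : [−ε₀, ε₀] → (bounded invertible operators on X) with ‖A(λ)⁻¹‖ ≤ c for all λ. Suppose there is a map A' : [−ε₀, ε₀] → L(Y, X), where Y is a Banach space continuously embedded in X, such that for every f ∈ Y: ‖(A(λ+μ) − A(λ) − μ A'(λ))f‖_X = o(|μ|) uniformly, and λ ↦ A'(λ)f is continuous. Then for every f ∈ Y the map λ ↦ A(λ)⁻¹ f is differentiable in X with derivative −A(λ)⁻¹ A'(λ) A(λ)⁻¹ f, provided also A(λ)⁻¹ maps Y into Y with uniformly bounded Y-norm and λ ↦ A(λ)g is continuous in X for g ∈ X. -/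
/-- Lemma 2.9, case `m = 1`: differentiability of `λ ↦ A(λ)⁻¹f` for `f` in the smaller
space `Y`, with derivative `-A(λ)⁻¹ A'(λ) A(λ)⁻¹ f`. -/
theorem stmt_14 {X Y : Type*}
    [NormedAddCommGroup X] [NormedSpace ℝ X] [CompleteSpace X]
    [NormedAddCommGroup Y] [NormedSpace ℝ Y] [CompleteSpace Y]
    (ε₀ c c' : ℝ) (hε : 0 < ε₀)
    (jYX : Y →L[ℝ] X)
    (A : ℝ → X ≃L[ℝ] X)
    (hbound : ∀ l ∈ Set.Icc (-ε₀) ε₀, ∀ f : X, ‖(A l).symm f‖ ≤ c * ‖f‖)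
    (A' : ℝ → Y →L[ℝ] X)
    (hderiv : ∀ f : Y, ∀ l ∈ Set.Icc (-ε₀) ε₀,
      HasDerivWithinAt (fun m => A m (jYX f)) (A' l f) (Set.Icc (-ε₀) ε₀) l)
    (hA'cont : ∀ f : Y, ContinuousOn (fun l => A' l f) (Set.Icc (-ε₀) ε₀))
    (hcont : ∀ g : X, ContinuousOn (fun l => A l g) (Set.Icc (-ε₀) ε₀))
    (Ainv : ℝ → Y → Y)
    (hAinv : ∀ l ∈ Set.Icc (-ε₀) ε₀, ∀ g : Y, jYX (Ainv l g) = (A l).symm (jYX g))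
    (hAinvBound : ∀ l ∈ Set.Icc (-ε₀) ε₀, ∀ g : Y, ‖Ainv l g‖ ≤ c' * ‖g‖) :
    ∀ f : Y, ∀ l ∈ Set.Icc (-ε₀) ε₀,
      HasDerivWithinAt (fun m => (A m).symm (jYX f))
        (-((A l).symm (A' l (Ainv l f)))) (Set.Icc (-ε₀) ε₀) l := by
  intro f l hl
  set s := Set.Icc (-ε₀ : ℝ) ε₀ with hs
  set g := Ainv l f with hgdef
  have hjg : jYX g = (A l).symm (jYX f) := hAinv l hl f
  rw [hasDerivWithinAt_iff_isLittleO]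
  have hR : (fun m => A m (jYX g) - A l (jYX g) - (m - l) • (A' l g))
      =o[nhdsWithin l s] fun m => m - l := by
    have := hderiv g l hl
    rwa [hasDerivWithinAt_iff_isLittleO] at this
  -- continuity of m ↦ (A m).symm x at l within s
  have hsymm_cont : ∀ x : X, Filter.Tendsto (fun m => (A m).symm x - (A l).symm x)
      (nhdsWithin l s) (nhds 0) := by
    intro x
    set y := (A l).symm x with hy
    have hc : Filter.Tendsto (fun m => A m y) (nhdsWithin l s) (nhds (A l y)) := hcont y l hl
    have hnorm : Filter.Tendsto (fun m => c * ‖A l y - A m y‖) (nhdsWithin l s) (nhds 0) := by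
      have h0 : Filter.Tendsto (fun m => A l y - A m y) (nhdsWithin l s) (nhds 0) := by
        have := Filter.Tendsto.sub (tendsto_const_nhds (x := A l y)) hc
        simpa using this
      have := (Filter.Tendsto.norm h0).const_mul c
      simpa using this
    apply squeeze_zero_norm' _ hnorm
    filter_upwards [self_mem_nhdsWithin] with m hm
    have heq : (A m).symm x - (A l).symm x = (A m).symm (A l y - A m y) := by
      rw [map_sub]
      have h1 : x = A l y := (ContinuousLinearEquiv.apply_symm_apply (A l) x).symm
      rw [ContinuousLinearEquiv.symm_apply_apply, ← hy, h1]
    rw [heq]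
    exact hbound m hm _
  -- first piece
  have h1 : (fun m => (m - l) • ((A m).symm (A' l g) - (A l).symm (A' l g)))
      =o[nhdsWithin l s] fun m => m - l := by
    have hphi : (fun m => (A m).symm (A' l g) - (A l).symm (A' l g))
        =o[nhdsWithin l s] (fun _ => (1 : ℝ)) :=
      (Asymptotics.isLittleO_one_iff ℝ).mpr (hsymm_cont (A' l g))
    have := (Asymptotics.isBigO_refl (fun m => m - l) (nhdsWithin l s)).smul_isLittleO hphi
    simpa using this
  -- second piece
  have h2 : (fun m => (A m).symm (A m (jYX g) - A l (jYX g) - (m - l) • (A' l g)))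
      =o[nhdsWithin l s] fun m => m - l := by
    refine (Asymptotics.IsBigO.trans_isLittleO ?_ hR)
    apply Asymptotics.IsBigO.of_bound c
    filter_upwards [self_mem_nhdsWithin] with m hm
    exact hbound m hm _
  have hsum := (h1.add h2).neg_left
  refine hsum.congr (fun m => ?_) (fun m => rfl)
  have hAmsymm : (A m).symm (A m (jYX g)) = jYX g :=
    ContinuousLinearEquiv.symm_apply_apply (A m) _
  have hAl : A l (jYX g) = jYX f := by
    rw [hjg]; exact ContinuousLinearEquiv.apply_symm_apply (A l) _
  rw [map_sub, map_sub, hAmsymm, hAl, hjg, map_smul, smul_sub, smul_neg]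
  abel
end

section
/- Let a : [0,1] → ℝ be C¹ with a(x) > 0 for all x, and let u : ℝ × [0,1] → ℝ be a C² function. Define v₁(t,x) := ∂_t u(t,x) + a(x)∂_x u(t,x) and v₂(t,x) := ∂_t u(t,x) − a(x)∂_x u(t,x). If u solves ∂_t²u − a(x)²∂_x²u + b(t,x,u,∂_t u,∂_x u) = 0 with u(t,0) = ∂_x u(t,1) = 0 and u(t+2π,x) = u(t,x), then (v₁, v₂) solves the first-order system ∂_t v₁ − a(x)∂_x v₁ = ∂_t v₂ + a(x)∂_x v₂ = −(a'(x)/2)(v₁ − v₂) − b(t,x, J₀v, J₁v, J₂v), with v₁(t+2π,x) = v₁(t,x), v₂(t+2π,x) = v₂(t,x), v₁(t,0) + v₂(t,0) = 0 and v₁(t,1) − v₂(t,1) = 0, where (J₀v)(t,x) := (1/2)∫₀ˣ (v₁(t,ξ) − v₂(t,ξ))/a(ξ) dξ, (J₁v)(t,x) := (v₁(t,x)+v₂(t,x))/2, (J₂v)(t,x) := (v₁(t,x)−v₂(t,x))/(2a(x)), and moreover u = J₀v. -/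
open Real

/-- Lemma 4.3 (i): the Riemann invariants `v₁ = ∂ₜu + a∂ₓu`, `v₂ = ∂ₜu - a∂ₓu` of a
time-periodic solution of the second-order equation with mixed Dirichlet–Neumann boundary
conditions solve the first-order system with reflection boundary conditions, and `u = J₀v`. -/
theorem stmt_17 (a : ℝ → ℝ) (ha : ContDiff ℝ 1 a)
    (hapos : ∀ x ∈ Set.Icc (0:ℝ) 1, 0 < a x)
    (b : ℝ → ℝ → ℝ → ℝ → ℝ → ℝ)
    (hb : ContDiff ℝ 1 (fun p : ℝ × ℝ × ℝ × ℝ × ℝ => b p.1 p.2.1 p.2.2.1 p.2.2.2.1 p.2.2.2.2))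
    (hbper : ∀ t x p q r, b (t + 2 * π) x p q r = b t x p q r)
    (u : ℝ → ℝ → ℝ) (hu : ContDiff ℝ 2 (Function.uncurry u))
    (hpde : ∀ t : ℝ, ∀ x ∈ Set.Icc (0:ℝ) 1,
      deriv (fun s => deriv (fun s' => u s' x) s) t
        - (a x) ^ 2 * deriv (fun y => deriv (fun y' => u t y') y) x
        + b t x (u t x) (deriv (fun s => u s x) t) (deriv (fun y => u t y) x) = 0)
    (hbc0 : ∀ t, u t 0 = 0) (hbc1 : ∀ t, deriv (fun y => u t y) 1 = 0)
    (hper : ∀ t x, u (t + 2 * π) x = u t x)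
    (v₁ v₂ : ℝ → ℝ → ℝ)
    (hv₁ : ∀ t x, v₁ t x = deriv (fun s => u s x) t + a x * deriv (fun y => u t y) x)
    (hv₂ : ∀ t x, v₂ t x = deriv (fun s => u s x) t - a x * deriv (fun y => u t y) x) :
    (∀ t : ℝ, ∀ x ∈ Set.Icc (0:ℝ) 1,
      (deriv (fun s => v₁ s x) t - a x * deriv (fun y => v₁ t y) x
        = -(deriv a x / 2) * (v₁ t x - v₂ t x)
          - b t x ((1/2) * ∫ ξ in (0:ℝ)..x, (v₁ t ξ - v₂ t ξ) / a ξ)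
              ((v₁ t x + v₂ t x) / 2) ((v₁ t x - v₂ t x) / (2 * a x))) ∧
      (deriv (fun s => v₂ s x) t + a x * deriv (fun y => v₂ t y) x
        = -(deriv a x / 2) * (v₁ t x - v₂ t x)
          - b t x ((1/2) * ∫ ξ in (0:ℝ)..x, (v₁ t ξ - v₂ t ξ) / a ξ)
              ((v₁ t x + v₂ t x) / 2) ((v₁ t x - v₂ t x) / (2 * a x)))) ∧
    (∀ t x, v₁ (t + 2 * π) x = v₁ t x ∧ v₂ (t + 2 * π) x = v₂ t x) ∧
    (∀ t, v₁ t 0 + v₂ t 0 = 0) ∧ (∀ t, v₁ t 1 - v₂ t 1 = 0) ∧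
    (∀ t : ℝ, ∀ x ∈ Set.Icc (0:ℝ) 1,
      u t x = (1/2) * ∫ ξ in (0:ℝ)..x, (v₁ t ξ - v₂ t ξ) / a ξ) := by
  set F := Function.uncurry u with hFdef
  have hF : ContDiff ℝ 2 F := hu
  have hFd : Differentiable ℝ F := hF.differentiable (by norm_num)
  have hf' : ContDiff ℝ 1 (fderiv ℝ F) := hF.fderiv_right (by norm_num)
  have hf'd : Differentiable ℝ (fderiv ℝ F) := hf'.differentiable one_ne_zero
  have hcurve : ∀ (t x : ℝ), HasDerivAt (fun s : ℝ => ((s, x) : ℝ × ℝ)) (1, 0) t :=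
    fun t x => (hasDerivAt_id t).prodMk (hasDerivAt_const t x)
  have hcurve2 : ∀ (t x : ℝ), HasDerivAt (fun y : ℝ => ((t, y) : ℝ × ℝ)) (0, 1) x :=
    fun t x => (hasDerivAt_const x t).prodMk (hasDerivAt_id x)
  -- first partial derivatives
  have hD1 : ∀ t x, HasDerivAt (fun s => u s x) (fderiv ℝ F (t, x) (1, 0)) t := fun t x => by
    have h := (hFd (t, x)).hasFDerivAt.comp_hasDerivAt t (hcurve t x); exact h
  have hD2 : ∀ t x, HasDerivAt (fun y => u t y) (fderiv ℝ F (t, x) (0, 1)) x := fun t x => by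
    have h := (hFd (t, x)).hasFDerivAt.comp_hasDerivAt x (hcurve2 t x); exact h
  have hut : ∀ t x, deriv (fun s => u s x) t = fderiv ℝ F (t, x) (1, 0) := fun t x =>
    (hD1 t x).deriv
  have hux : ∀ t x, deriv (fun y => u t y) x = fderiv ℝ F (t, x) (0, 1) := fun t x =>
    (hD2 t x).deriv
  -- second partial derivatives
  have hC1 : ∀ (t x : ℝ) (w : ℝ × ℝ), HasDerivAt (fun s => fderiv ℝ F (s, x) w)
      (fderiv ℝ (fderiv ℝ F) (t, x) (1, 0) w) t := by
    intro t x w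
    have h0 := (hf'd (t, x)).hasFDerivAt.comp_hasDerivAt t (hcurve t x)
    have h := h0.clm_apply (hasDerivAt_const t w)
    simpa using h
  have hC2 : ∀ (t x : ℝ) (w : ℝ × ℝ), HasDerivAt (fun y => fderiv ℝ F (t, y) w)
      (fderiv ℝ (fderiv ℝ F) (t, x) (0, 1) w) x := by
    intro t x w
    have h0 := (hf'd (t, x)).hasFDerivAt.comp_hasDerivAt x (hcurve2 t x)
    have h := h0.clm_apply (hasDerivAt_const x w)
    simpa using h
  have hsym : ∀ (p : ℝ × ℝ) (v w : ℝ × ℝ),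
      fderiv ℝ (fderiv ℝ F) p v w = fderiv ℝ (fderiv ℝ F) p w v := fun p v w =>
    second_derivative_symmetric (fun y => (hFd y).hasFDerivAt) ((hf'd p).hasFDerivAt) v w
  -- v in terms of fderiv
  have hv1' : ∀ t x, v₁ t x = fderiv ℝ F (t, x) (1, 0) + a x * fderiv ℝ F (t, x) (0, 1) := by
    intro t x; rw [hv₁, hut, hux]
  have hv2' : ∀ t x, v₂ t x = fderiv ℝ F (t, x) (1, 0) - a x * fderiv ℝ F (t, x) (0, 1) := by
    intro t x; rw [hv₂, hut, hux]
  have haD : ∀ x, HasDerivAt a (deriv a x) x := fun x =>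
    ((ha.differentiable one_ne_zero) x).hasDerivAt
  -- derivatives of v₁, v₂
  have hv1t : ∀ t x, deriv (fun s => v₁ s x) t
      = fderiv ℝ (fderiv ℝ F) (t, x) (1, 0) (1, 0)
        + a x * fderiv ℝ (fderiv ℝ F) (t, x) (1, 0) (0, 1) := by
    intro t x
    have he : (fun s => v₁ s x)
        = fun s => fderiv ℝ F (s, x) (1, 0) + a x * fderiv ℝ F (s, x) (0, 1) :=
      funext fun s => hv1' s x
    rw [he]
    exact ((hC1 t x (1, 0)).add ((hC1 t x (0, 1)).const_mul (a x))).deriv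
  have hv2t : ∀ t x, deriv (fun s => v₂ s x) t
      = fderiv ℝ (fderiv ℝ F) (t, x) (1, 0) (1, 0)
        - a x * fderiv ℝ (fderiv ℝ F) (t, x) (1, 0) (0, 1) := by
    intro t x
    have he : (fun s => v₂ s x)
        = fun s => fderiv ℝ F (s, x) (1, 0) - a x * fderiv ℝ F (s, x) (0, 1) :=
      funext fun s => hv2' s x
    rw [he]
    exact ((hC1 t x (1, 0)).sub ((hC1 t x (0, 1)).const_mul (a x))).deriv
  have hv1x : ∀ t x, deriv (fun y => v₁ t y) x
      = fderiv ℝ (fderiv ℝ F) (t, x) (0, 1) (1, 0)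
        + (deriv a x * fderiv ℝ F (t, x) (0, 1)
          + a x * fderiv ℝ (fderiv ℝ F) (t, x) (0, 1) (0, 1)) := by
    intro t x
    have he : (fun y => v₁ t y)
        = fun y => fderiv ℝ F (t, y) (1, 0) + a y * fderiv ℝ F (t, y) (0, 1) :=
      funext fun y => hv1' t y
    rw [he]
    exact ((hC2 t x (1, 0)).add ((haD x).mul (hC2 t x (0, 1)))).deriv
  have hv2x : ∀ t x, deriv (fun y => v₂ t y) x
      = fderiv ℝ (fderiv ℝ F) (t, x) (0, 1) (1, 0)
        - (deriv a x * fderiv ℝ F (t, x) (0, 1)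
          + a x * fderiv ℝ (fderiv ℝ F) (t, x) (0, 1) (0, 1)) := by
    intro t x
    have he : (fun y => v₂ t y)
        = fun y => fderiv ℝ F (t, y) (1, 0) - a y * fderiv ℝ F (t, y) (0, 1) :=
      funext fun y => hv2' t y
    rw [he]
    exact ((hC2 t x (1, 0)).sub ((haD x).mul (hC2 t x (0, 1)))).deriv
  -- PDE in terms of fderiv
  have hpde' : ∀ t : ℝ, ∀ x ∈ Set.Icc (0:ℝ) 1,
      fderiv ℝ (fderiv ℝ F) (t, x) (1, 0) (1, 0)
        - (a x) ^ 2 * fderiv ℝ (fderiv ℝ F) (t, x) (0, 1) (0, 1)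
        + b t x (u t x) (fderiv ℝ F (t, x) (1, 0)) (fderiv ℝ F (t, x) (0, 1)) = 0 := by
    intro t x hx
    have h := hpde t x hx
    have he1 : (fun s => deriv (fun s' => u s' x) s) = fun s => fderiv ℝ F (s, x) (1, 0) :=
      funext fun s => hut s x
    have he2 : (fun y => deriv (fun y' => u t y') y) = fun y => fderiv ℝ F (t, y) (0, 1) :=
      funext fun y => hux t y
    rw [he1, he2, (hC1 t x (1, 0)).deriv, (hC2 t x (0, 1)).deriv, hut, hux] at h
    exact h
  -- the integral identity: u = J₀ v
  have huint : ∀ t : ℝ, ∀ x ∈ Set.Icc (0:ℝ) 1,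
      u t x = (1/2) * ∫ ξ in (0:ℝ)..x, (v₁ t ξ - v₂ t ξ) / a ξ := by
    intro t x hx
    have hfy : ContDiff ℝ 2 (fun y => u t y) := hF.comp (contDiff_const.prodMk contDiff_id)
    have hcongr : Set.EqOn (fun ξ => (v₁ t ξ - v₂ t ξ) / a ξ)
        (fun ξ => 2 * deriv (fun y => u t y) ξ) (Set.uIcc 0 x) := by
      intro ξ hξ
      have hξ' : ξ ∈ Set.Icc (0:ℝ) 1 := by
        rw [Set.uIcc_of_le hx.1] at hξ
        exact ⟨hξ.1, hξ.2.trans hx.2⟩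
      have haξ : a ξ ≠ 0 := (hapos ξ hξ').ne'
      have : v₁ t ξ - v₂ t ξ = 2 * a ξ * deriv (fun y => u t y) ξ := by
        rw [hv₁, hv₂]; ring
      simp only [this]
      field_simp
    rw [intervalIntegral.integral_congr hcongr, intervalIntegral.integral_const_mul,
      intervalIntegral.integral_deriv_eq_sub
        (fun ξ _ => (hfy.differentiable (by norm_num)).differentiableAt)
        ((hfy.continuous_deriv (by norm_num)).intervalIntegrable 0 x),
      hbc0]
    ring
  refine ⟨?_, ?_, ?_, ?_, huint⟩
  · -- the first-order system
    intro t x hx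
    have hax : a x ≠ 0 := (hapos x hx).ne'
    have hJ0 : (1/2) * (∫ ξ in (0:ℝ)..x, (v₁ t ξ - v₂ t ξ) / a ξ) = u t x :=
      (huint t x hx).symm
    have hJ1 : (v₁ t x + v₂ t x) / 2 = fderiv ℝ F (t, x) (1, 0) := by
      rw [hv1', hv2']; ring
    have hJ2 : (v₁ t x - v₂ t x) / (2 * a x) = fderiv ℝ F (t, x) (0, 1) := by
      rw [hv1', hv2']; field_simp; ring
    have hdiff : v₁ t x - v₂ t x = 2 * a x * fderiv ℝ F (t, x) (0, 1) := by
      rw [hv1', hv2']; ring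
    have hp := hpde' t x hx
    have hs := hsym (t, x) (1, 0) (0, 1)
    constructor
    · rw [hv1t, hv1x, hJ0, hJ1, hJ2, hdiff, hs]
      nlinarith [hp]
    · rw [hv2t, hv2x, hJ0, hJ1, hJ2, hdiff, hs]
      nlinarith [hp]
  · -- periodicity
    intro t x
    have hperx : (fun y => u (t + 2 * π) y) = fun y => u t y := funext fun y => hper t y
    have hpert : (fun s => u (s + 2 * π) x) = fun s => u s x := funext fun s => hper s x
    have hshift : deriv (fun s => u s x) (t + 2 * π) = deriv (fun s => u s x) t := by
      rw [← deriv_comp_add_const (fun s => u s x) (2 * π) t, hpert]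
    constructor
    · rw [hv₁, hv₁, hshift, hperx]
    · rw [hv₂, hv₂, hshift, hperx]
  · -- boundary at 0
    intro t
    have h0 : (fun s => u s 0) = fun _ => (0:ℝ) := funext fun s => hbc0 s
    rw [hv₁, hv₂, h0, deriv_const]
    ring
  · -- boundary at 1
    intro t
    rw [hv₁, hv₂, hbc1]
    ring
end

section
/- Let a : [0,1] → ℝ be C¹ with a(x) > 0, b : ℝ × [0,1] × ℝ³ → ℝ C¹ and 2π-periodic in t, and let (v₁, v₂) be a C¹ solution of the system ∂_t v₁ − a(x)∂_x v₁ = ∂_t v₂ + a(x)∂_x v₂ = −(a'(x)/2)(v₁ − v₂) − b(t,x, J₀v, J₁v, J₂v) with the periodicity and boundary conditions v_j(t+2π,x) = v_j(t,x), v₁(t,0) + v₂(t,0) = 0, v₁(t,1) − v₂(t,1) = 0, where J₀, J₁, J₂ are defined as in the reduction (J₀v = (1/2)∫₀ˣ(v₁−v₂)/a, J₁v = (v₁+v₂)/2, J₂v = (v₁−v₂)/(2a)). Then u := J₀v is C², 2π-periodic in t, and solves ∂_t²u − a(x)²∂_x²u + b(t,x,u,∂_tu,∂_xu) = 0 with u(t,0)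 = ∂_x u(t,1) = 0. -/
open Real Set intervalIntegral MeasureTheory

lemma joint_hasFDerivAt (g gt : ℝ × ℝ → ℝ) (U : Set ℝ) (hU : IsOpen U)
    (hUc : U.OrdConnected) (h0 : (0:ℝ) ∈ U)
    (hg : ContinuousOn g (Set.univ ×ˢ U))
    (hgt : ContinuousOn gt (Set.univ ×ˢ U))
    (hder : ∀ t ξ, ξ ∈ U → HasDerivAt (fun s => g (s, ξ)) (gt (t, ξ)) t)
    (t₀ x₀ : ℝ) (hx₀ : x₀ ∈ U) :
    HasFDerivAt (fun p : ℝ × ℝ => ∫ ξ in (0:ℝ)..p.2, g (p.1, ξ))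
      ((∫ ξ in (0:ℝ)..x₀, gt (t₀, ξ)) • ContinuousLinearMap.fst ℝ ℝ ℝ
        + (g (t₀, x₀)) • ContinuousLinearMap.snd ℝ ℝ ℝ) (t₀, x₀) := by
  have hgc : ∀ (t : ℝ) {p q : ℝ}, uIcc p q ⊆ U →
      IntervalIntegrable (fun ξ => g (t, ξ)) volume p q := by
    intro t p q hpq
    apply ContinuousOn.intervalIntegrable
    exact hg.comp (continuous_const.prodMk continuous_id).continuousOn
      (fun ξ hξ => ⟨trivial, hpq hξ⟩)
  have hgtc : ∀ (t : ℝ) {p q : ℝ}, uIcc p q ⊆ U →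
      IntervalIntegrable (fun ξ => gt (t, ξ)) volume p q := by
    intro t p q hpq
    apply ContinuousOn.intervalIntegrable
    exact hgt.comp (continuous_const.prodMk continuous_id).continuousOn
      (fun ξ hξ => ⟨trivial, hpq hξ⟩)
  have h0x₀ : uIcc 0 x₀ ⊆ U := hUc.uIcc_subset h0 hx₀
  obtain ⟨r, hrpos, hrball⟩ := Metric.isOpen_iff.1 hU x₀ hx₀
  rw [hasFDerivAt_iff_isLittleO_nhds_zero, Asymptotics.isLittleO_iff]
  intro c hc
  set ε₁ : ℝ := c / (2 * (|x₀| + 1)) with hε₁def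
  have hε₁pos : 0 < ε₁ := by positivity
  set ε₂ : ℝ := c / 2 with hε₂def
  have hε₂pos : 0 < ε₂ := by positivity
  -- uniform continuity of gt on a compact tube
  have hCcomp : IsCompact (Icc (t₀ - 1) (t₀ + 1) ×ˢ uIcc 0 x₀) :=
    isCompact_Icc.prod isCompact_uIcc
  have hCsub : Icc (t₀ - 1) (t₀ + 1) ×ˢ uIcc 0 x₀ ⊆ Set.univ ×ˢ U :=
    fun p hp => ⟨trivial, h0x₀ hp.2⟩
  obtain ⟨δ₁, hδ₁pos, hδ₁⟩ := Metric.uniformContinuousOn_iff.1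
    (hCcomp.uniformContinuousOn_of_continuous (hgt.mono hCsub)) ε₁ hε₁pos
  -- continuity of g at (t₀, x₀)
  have hgat : ContinuousAt g (t₀, x₀) :=
    hg.continuousAt ((isOpen_univ.prod hU).mem_nhds ⟨trivial, hx₀⟩)
  obtain ⟨δ₂, hδ₂pos, hδ₂⟩ := Metric.continuousAt_iff.1 hgat ε₂ hε₂pos
  set δ : ℝ := min (min δ₁ 1) (min δ₂ r) with hδdef
  have hδpos : 0 < δ := by positivity
  filter_upwards [Metric.ball_mem_nhds (0 : ℝ × ℝ) hδpos] with h hh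
  have hhn : ‖h‖ < δ := by simpa [Metric.mem_ball] using hh
  have hh1 : |h.1| ≤ ‖h‖ := norm_fst_le h
  have hh2 : |h.2| ≤ ‖h‖ := norm_snd_le h
  set t : ℝ := t₀ + h.1 with htdef
  set x : ℝ := x₀ + h.2 with hxdef
  have hxball : x ∈ Metric.ball x₀ r := by
    rw [Metric.mem_ball, Real.dist_eq]
    have : |x - x₀| = |h.2| := by rw [hxdef]; ring_nf
    rw [this]
    exact lt_of_le_of_lt hh2 (lt_of_lt_of_le hhn ((min_le_right _ _).trans (min_le_right _ _)))
  have hδle1 : δ ≤ 1 := (min_le_left _ _).trans (min_le_right _ _)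
  have hδleδ₁ : δ ≤ δ₁ := (min_le_left _ _).trans (min_le_left _ _)
  have hδleδ₂ : δ ≤ δ₂ := (min_le_right _ _).trans (min_le_left _ _)
  have hx₀x : uIcc x₀ x ⊆ U :=
    subset_trans ((convex_ball x₀ r).ordConnected.uIcc_subset
      (Metric.mem_ball_self hrpos) hxball) hrball
  -- integrability
  have i1 : IntervalIntegrable (fun ξ => g (t, ξ)) volume 0 x₀ := hgc t h0x₀
  have i1' : IntervalIntegrable (fun ξ => g (t₀, ξ)) volume 0 x₀ := hgc t₀ h0x₀
  have i2 : IntervalIntegrable (fun ξ => g (t, ξ)) volume x₀ x := hgc t hx₀x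
  have i3 : IntervalIntegrable (fun ξ => gt (t₀, ξ)) volume 0 x₀ := hgtc t₀ h0x₀
  set T1 : ℝ := ∫ ξ in (0:ℝ)..x₀, (g (t, ξ) - g (t₀, ξ) - h.1 * gt (t₀, ξ)) with hT1def
  set T2 : ℝ := ∫ ξ in x₀..x, (g (t, ξ) - g (t₀, x₀)) with hT2def
  have hT1eq : T1 = (∫ ξ in (0:ℝ)..x₀, g (t, ξ)) - (∫ ξ in (0:ℝ)..x₀, g (t₀, ξ))
      - h.1 * ∫ ξ in (0:ℝ)..x₀, gt (t₀, ξ) := by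
    rw [hT1def, integral_sub (i1.sub i1') (i3.const_mul h.1), integral_sub i1 i1',
      intervalIntegral.integral_const_mul]
  have hT2eq : T2 = (∫ ξ in x₀..x, g (t, ξ)) - g (t₀, x₀) * h.2 := by
    rw [hT2def, integral_sub i2 intervalIntegrable_const, intervalIntegral.integral_const,
      smul_eq_mul]
    have : x - x₀ = h.2 := by rw [hxdef]; ring
    rw [this]; ring
  -- the error splits
  have hsplit : (∫ ξ in (0:ℝ)..x, g (t, ξ)) - (∫ ξ in (0:ℝ)..x₀, g (t₀, ξ))
      - ((∫ ξ in (0:ℝ)..x₀, gt (t₀, ξ)) * h.1 + g (t₀, x₀) * h.2) = T1 + T2 := by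
    rw [hT1eq, hT2eq, ← integral_add_adjacent_intervals i1 i2]
    ring
  -- bound on T1
  have hT1bound : ‖T1‖ ≤ ε₁ * |h.1| * |x₀| := by
    have hb : ∀ ξ ∈ Set.uIoc (0:ℝ) x₀, ‖g (t, ξ) - g (t₀, ξ) - h.1 * gt (t₀, ξ)‖ ≤ ε₁ * |h.1| := by
      intro ξ hξ
      have hξU : ξ ∈ U := h0x₀ (uIoc_subset_uIcc hξ)
      have hξK : ξ ∈ uIcc 0 x₀ := uIoc_subset_uIcc hξ
      have key := Convex.norm_image_sub_le_of_norm_hasDerivWithin_le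
        (f := fun s => g (s, ξ) - s * gt (t₀, ξ))
        (f' := fun s => gt (s, ξ) - gt (t₀, ξ)) (s := uIcc t₀ t) (C := ε₁)
        (fun s _ => ((hder s ξ hξU).sub (hasDerivAt_mul_const _)).hasDerivWithinAt)
        ?_ (convex_uIcc t₀ t) left_mem_uIcc right_mem_uIcc
      · have : (fun s => g (s, ξ) - s * gt (t₀, ξ)) t
            - (fun s => g (s, ξ) - s * gt (t₀, ξ)) t₀
            = g (t, ξ) - g (t₀, ξ) - h.1 * gt (t₀, ξ) := by
          simp only [htdef]; ring
        rw [this] at key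
        refine key.trans ?_
        have : ‖t - t₀‖ = |h.1| := by rw [htdef]; simp
        rw [this]
      · intro s hs
        have hst₀ : |s - t₀| ≤ |h.1| := by
          have ht : t - t₀ = h.1 := by rw [htdef]; ring
          exact ht ▸ abs_sub_left_of_mem_uIcc hs
        have hsI : s ∈ Icc (t₀ - 1) (t₀ + 1) := by
          have : |s - t₀| ≤ 1 := hst₀.trans ((hh1.trans hhn.le).trans hδle1)
          rw [abs_sub_le_iff] at this
          constructor <;> linarith [this.1, this.2]
        have hpair := hδ₁ (s, ξ) ⟨hsI, hξK⟩ (t₀, ξ)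
          ⟨⟨by linarith, by linarith⟩, hξK⟩ ?_
        · exact le_of_lt (by simpa [Real.dist_eq] using hpair)
        · rw [Prod.dist_eq]
          simp only [dist_self, Real.dist_eq]
          exact max_lt (lt_of_le_of_lt (hst₀.trans hh1) (hhn.trans_le hδleδ₁)) hδ₁pos
    have := norm_integral_le_of_norm_le_const hb
    calc ‖T1‖ ≤ ε₁ * |h.1| * |x₀ - 0| := this
    _ = ε₁ * |h.1| * |x₀| := by rw [sub_zero]
  -- bound on T2
  have hT2bound : ‖T2‖ ≤ ε₂ * |h.2| := by
    have hb : ∀ ξ ∈ Set.uIoc x₀ x, ‖g (t, ξ) - g (t₀, x₀)‖ ≤ ε₂ := by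
      intro ξ hξ
      have hξx : |ξ - x₀| ≤ |h.2| := by
        have hx' : x - x₀ = h.2 := by rw [hxdef]; ring
        exact hx' ▸ abs_sub_left_of_mem_uIcc (uIoc_subset_uIcc hξ)
      have hd : dist (t, ξ) ((t₀, x₀) : ℝ × ℝ) < δ₂ := by
        rw [Prod.dist_eq]
        simp only [Real.dist_eq]
        have h1 : t - t₀ = h.1 := by rw [htdef]; ring
        refine max_lt ?_ ?_
        · rw [h1]; exact lt_of_le_of_lt hh1 (hhn.trans_le hδleδ₂)
        · exact lt_of_le_of_lt hξx (lt_of_le_of_lt hh2 (hhn.trans_le hδleδ₂))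
      have := hδ₂ hd
      rw [Real.dist_eq] at this
      rw [Real.norm_eq_abs]
      exact this.le
    have := norm_integral_le_of_norm_le_const hb
    calc ‖T2‖ ≤ ε₂ * |x - x₀| := this
    _ = ε₂ * |h.2| := by rw [hxdef]; ring_nf
  have hgoal : (fun p : ℝ × ℝ => ∫ ξ in (0:ℝ)..p.2, g (p.1, ξ)) ((t₀, x₀) + h)
      - (fun p : ℝ × ℝ => ∫ ξ in (0:ℝ)..p.2, g (p.1, ξ)) (t₀, x₀)
      - ((∫ ξ in (0:ℝ)..x₀, gt (t₀, ξ)) • ContinuousLinearMap.fst ℝ ℝ ℝ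
        + (g (t₀, x₀)) • ContinuousLinearMap.snd ℝ ℝ ℝ) h = T1 + T2 := by
    have e1 : ((t₀, x₀) + h : ℝ × ℝ).1 = t := by rw [htdef]; rfl
    have e2 : ((t₀, x₀) + h : ℝ × ℝ).2 = x := by rw [hxdef]; rfl
    simp only [ContinuousLinearMap.add_apply, ContinuousLinearMap.smul_apply,
      ContinuousLinearMap.coe_fst', ContinuousLinearMap.coe_snd', smul_eq_mul, e1, e2]
    exact hsplit
  rw [hgoal]
  have key1 : ε₁ * |x₀| ≤ c / 2 := by
    rw [hε₁def, div_mul_eq_mul_div, div_le_div_iff₀ (by positivity) (by norm_num : (0:ℝ) < 2)]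
    nlinarith [abs_nonneg x₀, hc.le]
  have key2 : (c / 2) * |h.2| ≤ (c / 2) * ‖h‖ := mul_le_mul_of_nonneg_left hh2 (by positivity)
  have key3 : (ε₁ * |x₀|) * |h.1| ≤ (c / 2) * ‖h‖ :=
    mul_le_mul key1 hh1 (abs_nonneg _) (by positivity)
  calc ‖T1 + T2‖ ≤ ‖T1‖ + ‖T2‖ := norm_add_le _ _
  _ ≤ ε₁ * |h.1| * |x₀| + ε₂ * |h.2| := add_le_add hT1bound hT2bound
  _ ≤ (c / 2) * ‖h‖ + (c / 2) * ‖h‖ := by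
      refine add_le_add ?_ (by rw [hε₂def]; exact key2)
      calc ε₁ * |h.1| * |x₀| = (ε₁ * |x₀|) * |h.1| := by ring
      _ ≤ (c / 2) * ‖h‖ := key3
  _ = c * ‖h‖ := by ring


/-- Lemma 4.3 (ii): a C¹ time-periodic solution `(v₁,v₂)` of the first-order system with
reflection boundary conditions gives, via `u = J₀v`, a C² time-periodic solution of the
second-order equation with mixed Dirichlet–Neumann boundary conditions. -/
theorem stmt_18 (a : ℝ → ℝ) (ha : ContDiff ℝ 1 a)
    (hapos : ∀ x ∈ Set.Icc (0:ℝ) 1, 0 < a x)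
    (b : ℝ → ℝ → ℝ → ℝ → ℝ → ℝ)
    (hb : ContDiff ℝ 1 (fun p : ℝ × ℝ × ℝ × ℝ × ℝ => b p.1 p.2.1 p.2.2.1 p.2.2.2.1 p.2.2.2.2))
    (hbper : ∀ t x p q r, b (t + 2 * π) x p q r = b t x p q r)
    (v₁ v₂ : ℝ → ℝ → ℝ)
    (hv₁smooth : ContDiff ℝ 1 (Function.uncurry v₁))
    (hv₂smooth : ContDiff ℝ 1 (Function.uncurry v₂))
    (hsys : ∀ t : ℝ, ∀ x ∈ Set.Icc (0:ℝ) 1,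
      (deriv (fun s => v₁ s x) t - a x * deriv (fun y => v₁ t y) x
        = -(deriv a x / 2) * (v₁ t x - v₂ t x)
          - b t x ((1/2) * ∫ ξ in (0:ℝ)..x, (v₁ t ξ - v₂ t ξ) / a ξ)
              ((v₁ t x + v₂ t x) / 2) ((v₁ t x - v₂ t x) / (2 * a x))) ∧
      (deriv (fun s => v₂ s x) t + a x * deriv (fun y => v₂ t y) x
        = -(deriv a x / 2) * (v₁ t x - v₂ t x)
          - b t x ((1/2) * ∫ ξ in (0:ℝ)..x, (v₁ t ξ - v₂ t ξ) / a ξ)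
              ((v₁ t x + v₂ t x) / 2) ((v₁ t x - v₂ t x) / (2 * a x))))
    (hper : ∀ t x, v₁ (t + 2 * π) x = v₁ t x ∧ v₂ (t + 2 * π) x = v₂ t x)
    (hbc : ∀ t, v₁ t 0 + v₂ t 0 = 0 ∧ v₁ t 1 - v₂ t 1 = 0)
    (u : ℝ → ℝ → ℝ)
    (hu : ∀ t x, u t x = (1/2) * ∫ ξ in (0:ℝ)..x, (v₁ t ξ - v₂ t ξ) / a ξ) :
    ContDiffOn ℝ 2 (Function.uncurry u) (Set.univ ×ˢ Set.Icc (0:ℝ) 1) ∧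
    (∀ t x, u (t + 2 * π) x = u t x) ∧
    (∀ t : ℝ, ∀ x ∈ Set.Icc (0:ℝ) 1,
      deriv (fun s => deriv (fun s' => u s' x) s) t
        - (a x) ^ 2 * deriv (fun y => deriv (fun y' => u t y') y) x
        + b t x (u t x) (deriv (fun s => u s x) t) (deriv (fun y => u t y) x) = 0) ∧
    (∀ t, u t 0 = 0) ∧ (∀ t, deriv (fun y => u t y) 1 = 0) := by
  -- Step 1: an open interval U ⊇ [0,1] on which a > 0
  have hS : IsOpen {x : ℝ | 0 < a x} := isOpen_lt continuous_const ha.continuous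
  obtain ⟨ε₀, hε₀pos, hball₀⟩ := Metric.isOpen_iff.1 hS 0 (hapos 0 ⟨le_rfl, zero_le_one⟩)
  obtain ⟨ε₁', hε₁pos, hball₁⟩ := Metric.isOpen_iff.1 hS 1 (hapos 1 ⟨zero_le_one, le_rfl⟩)
  set ε : ℝ := min ε₀ ε₁' / 2 with hεdef
  have hεpos : 0 < ε := by positivity
  set U : Set ℝ := Ioo (-ε) (1 + ε) with hUdef
  have hUopen : IsOpen U := isOpen_Ioo
  have hUa : ∀ x ∈ U, 0 < a x := by
    intro x hx
    rcases lt_or_ge x 0 with h | h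
    · refine hball₀ ?_
      rw [Metric.mem_ball, Real.dist_eq, sub_zero]
      have : -ε < x := hx.1
      have : |x| < ε := by rw [abs_of_neg h]; linarith
      exact this.trans_le ((half_le_self (le_min hε₀pos.le hε₁pos.le)).trans (min_le_left _ _))
    · rcases le_or_gt x 1 with h' | h'
      · exact hapos x ⟨h, h'⟩
      · refine hball₁ ?_
        rw [Metric.mem_ball, Real.dist_eq]
        have hx2 : x < 1 + ε := hx.2
        have : |x - 1| < ε := by rw [abs_of_pos (by linarith)]; linarith
        exact this.trans_le ((half_le_self (le_min hε₀pos.le hε₁pos.le)).trans (min_le_right _ _))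
  have hIccU : Icc (0:ℝ) 1 ⊆ U := fun x hx => ⟨by linarith [hx.1], by linarith [hx.2]⟩
  -- Step 2: the function g and its properties
  set g : ℝ × ℝ → ℝ := fun p => (v₁ p.1 p.2 - v₂ p.1 p.2) / a p.2 with hgdef
  set O : Set (ℝ × ℝ) := Set.univ ×ˢ U with hOdef
  have hOopen : IsOpen O := isOpen_univ.prod hUopen
  have hgC : ContDiffOn ℝ 1 g O := by
    apply ContDiffOn.div
    · exact (hv₁smooth.sub hv₂smooth).contDiffOn
    · exact (ha.comp contDiff_snd).contDiffOn
    · exact fun p hp => ne_of_gt (hUa p.2 hp.2)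
  have hgdiff : ∀ p ∈ O, DifferentiableAt ℝ g p :=
    fun p hp => (hgC.differentiableOn one_ne_zero).differentiableAt (hOopen.mem_nhds hp)
  set gt : ℝ × ℝ → ℝ := fun p => fderiv ℝ g p (1, 0) with hgtdef
  have hgtc : ContinuousOn gt O :=
    (hgC.continuousOn_fderiv_of_isOpen hOopen le_rfl).clm_apply continuousOn_const
  have hgcont : ContinuousOn g O := hgC.continuousOn
  have hder : ∀ t ξ, ξ ∈ U → HasDerivAt (fun s => g (s, ξ)) (gt (t, ξ)) t := by
    intro t ξ hξ
    exact (hgdiff (t, ξ) ⟨trivial, hξ⟩).hasFDerivAt.comp_hasDerivAt t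
      ((hasDerivAt_id t).prodMk (hasDerivAt_const t ξ))
  -- Step 3: partial derivatives of v₁, v₂ exist
  have hD1t : ∀ t x, HasDerivAt (fun s => v₁ s x) (deriv (fun s => v₁ s x) t) t := by
    intro t x
    have h := ((hv₁smooth.differentiable one_ne_zero) (t, x)).hasFDerivAt.comp_hasDerivAt t
      ((hasDerivAt_id t).prodMk (hasDerivAt_const t x))
    exact h.differentiableAt.hasDerivAt
  have hD2t : ∀ t x, HasDerivAt (fun s => v₂ s x) (deriv (fun s => v₂ s x) t) t := by
    intro t x
    have h := ((hv₂smooth.differentiable one_ne_zero) (t, x)).hasFDerivAt.comp_hasDerivAt t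
      ((hasDerivAt_id t).prodMk (hasDerivAt_const t x))
    exact h.differentiableAt.hasDerivAt
  have hD1x : ∀ t x, HasDerivAt (fun y => v₁ t y) (deriv (fun y => v₁ t y) x) x := by
    intro t x
    have h := ((hv₁smooth.differentiable one_ne_zero) (t, x)).hasFDerivAt.comp_hasDerivAt x
      ((hasDerivAt_const x t).prodMk (hasDerivAt_id x))
    exact h.differentiableAt.hasDerivAt
  have hD2x : ∀ t x, HasDerivAt (fun y => v₂ t y) (deriv (fun y => v₂ t y) x) x := by
    intro t x
    have h := ((hv₂smooth.differentiable one_ne_zero) (t, x)).hasFDerivAt.comp_hasDerivAt x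
      ((hasDerivAt_const x t).prodMk (hasDerivAt_id x))
    exact h.differentiableAt.hasDerivAt
  -- Step 4: identification of gt
  have hgt_eq : ∀ t ξ, ξ ∈ U →
      gt (t, ξ) = (deriv (fun s => v₁ s ξ) t - deriv (fun s => v₂ s ξ) t) / a ξ := by
    intro t ξ hξ
    have h2 : HasDerivAt (fun s => g (s, ξ))
        ((deriv (fun s => v₁ s ξ) t - deriv (fun s => v₂ s ξ) t) / a ξ) t :=
      ((hD1t t ξ).sub (hD2t t ξ)).div_const (a ξ)
    exact (hder t ξ hξ).unique h2
  -- Step 5: key identity for the time-derivative integral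
  have hkey : ∀ t : ℝ, ∀ x ∈ Icc (0:ℝ) 1,
      (∫ ξ in (0:ℝ)..x, gt (t, ξ)) = v₁ t x + v₂ t x := by
    intro t x hx
    have huIcc : uIcc (0:ℝ) x ⊆ Icc (0:ℝ) 1 := by
      rw [uIcc_of_le hx.1]
      exact fun ξ hξ => ⟨hξ.1, hξ.2.trans hx.2⟩
    have hderiv : ∀ ξ ∈ uIcc (0:ℝ) x,
        HasDerivAt (fun y => v₁ t y + v₂ t y) (gt (t, ξ)) ξ := by
      intro ξ hξ
      have hξI : ξ ∈ Icc (0:ℝ) 1 := huIcc hξ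
      have hξU : ξ ∈ U := hIccU hξI
      have haξ : a ξ ≠ 0 := ne_of_gt (hUa ξ hξU)
      have hval : gt (t, ξ) = deriv (fun y => v₁ t y) ξ + deriv (fun y => v₂ t y) ξ := by
        rw [hgt_eq t ξ hξU]
        have h1 := (hsys t ξ hξI).1
        have h2 := (hsys t ξ hξI).2
        field_simp
        linarith [h1, h2]
      rw [hval]
      exact (hD1x t ξ).add (hD2x t ξ)
    have hint : IntervalIntegrable (fun ξ => gt (t, ξ)) volume 0 x := by
      apply ContinuousOn.intervalIntegrable
      exact hgtc.comp (continuous_const.prodMk continuous_id).continuousOn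
        (fun ξ hξ => ⟨trivial, hIccU (huIcc hξ)⟩)
    rw [intervalIntegral.integral_eq_sub_of_hasDerivAt hderiv hint]
    have := (hbc t).1
    linarith [this]
  -- Step 6: expression of u via g
  have huF : ∀ t x, u t x = (1/2) * ∫ ξ in (0:ℝ)..x, g (t, ξ) := by
    intro t x
    rw [hu t x]
  have huncurry : Function.uncurry u = fun p : ℝ × ℝ =>
      (1/2) * ∫ ξ in (0:ℝ)..p.2, g (p.1, ξ) := funext fun p => huF p.1 p.2
  -- Step 7: joint derivative of u
  have hUF : ∀ t₀ x₀, x₀ ∈ U → HasFDerivAt (Function.uncurry u)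
      ((1/2 : ℝ) • ((∫ ξ in (0:ℝ)..x₀, gt (t₀, ξ)) • ContinuousLinearMap.fst ℝ ℝ ℝ
        + (g (t₀, x₀)) • ContinuousLinearMap.snd ℝ ℝ ℝ)) (t₀, x₀) := by
    intro t₀ x₀ hx₀
    have hF := joint_hasFDerivAt g gt U hUopen (Set.ordConnected_Ioo)
      (hIccU ⟨le_rfl, zero_le_one⟩) hgcont hgtc hder t₀ x₀ hx₀
    have := hF.const_smul (1/2 : ℝ)
    rw [huncurry]
    exact this
  -- Step 8: partial derivatives of u
  have hut : ∀ t x, x ∈ Icc (0:ℝ) 1 →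
      HasDerivAt (fun s => u s x) ((v₁ t x + v₂ t x) / 2) t := by
    intro t x hx
    have h := (hUF t x (hIccU hx)).comp_hasDerivAt t
      ((hasDerivAt_id t).prodMk (hasDerivAt_const t x))
    have hval : ((1/2 : ℝ) • ((∫ ξ in (0:ℝ)..x, gt (t, ξ)) • ContinuousLinearMap.fst ℝ ℝ ℝ
        + (g (t, x)) • ContinuousLinearMap.snd ℝ ℝ ℝ)) ((1:ℝ), (0:ℝ)) = (v₁ t x + v₂ t x) / 2 := by
      simp [hkey t x hx]
      ring
    rw [hval] at h
    exact h
  have hux : ∀ t x, x ∈ U → HasDerivAt (fun y => u t y) (g (t, x) / 2) x := by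
    intro t x hx
    have h := (hUF t x hx).comp_hasDerivAt x
      ((hasDerivAt_const x t).prodMk (hasDerivAt_id x))
    have hval : ((1/2 : ℝ) • ((∫ ξ in (0:ℝ)..x, gt (t, ξ)) • ContinuousLinearMap.fst ℝ ℝ ℝ
        + (g (t, x)) • ContinuousLinearMap.snd ℝ ℝ ℝ)) ((0:ℝ), (1:ℝ)) = g (t, x) / 2 := by
      simp
      ring
    rw [hval] at h
    exact h
  -- Step 9: C² regularity
  have hUD : UniqueDiffOn ℝ (Set.univ ×ˢ Icc (0:ℝ) 1) :=
    (uniqueDiffOn_univ : UniqueDiffOn ℝ (Set.univ : Set ℝ)).prod (uniqueDiffOn_Icc one_pos)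
  have hsubO : (Set.univ ×ˢ Icc (0:ℝ) 1) ⊆ O := fun p hp => ⟨trivial, hIccU hp.2⟩
  set M : ℝ × ℝ → (ℝ × ℝ →L[ℝ] ℝ) := fun z =>
    ((v₁ z.1 z.2 + v₂ z.1 z.2) / 2) • ContinuousLinearMap.fst ℝ ℝ ℝ
      + (g z / 2) • ContinuousLinearMap.snd ℝ ℝ ℝ with hMdef
  have hdiffOn : DifferentiableOn ℝ (Function.uncurry u) (Set.univ ×ˢ Icc (0:ℝ) 1) := by
    intro z hz
    have := (hUF z.1 z.2 (hIccU hz.2)).differentiableAt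
    rw [Prod.mk.eta] at this
    exact this.differentiableWithinAt
  have hfw : ∀ z ∈ (Set.univ ×ˢ Icc (0:ℝ) 1),
      fderivWithin ℝ (Function.uncurry u) (Set.univ ×ˢ Icc (0:ℝ) 1) z = M z := by
    intro z hz
    have h0 := hUF z.1 z.2 (hIccU hz.2)
    rw [Prod.mk.eta] at h0
    rw [h0.hasFDerivWithinAt.fderivWithin (hUD z hz)]
    have hk := hkey z.1 z.2 hz.2
    rw [hMdef]
    refine ContinuousLinearMap.ext fun w => ?_
    simp [hk]
    ring
  have hMC : ContDiffOn ℝ 1 M (Set.univ ×ˢ Icc (0:ℝ) 1) := by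
    apply ContDiffOn.add
    · apply ContDiffOn.fun_smul _ contDiffOn_const
      exact ((hv₁smooth.add hv₂smooth).div_const 2).contDiffOn
    · exact ((hgC.mono hsubO).div_const 2).fun_smul contDiffOn_const
  have hC2 : ContDiffOn ℝ 2 (Function.uncurry u) (Set.univ ×ˢ Icc (0:ℝ) 1) := by
    rw [show (2 : WithTop ℕ∞) = 1 + 1 by norm_num, contDiffOn_succ_iff_fderivWithin hUD]
    exact ⟨hdiffOn, fun h => by simp at h, hMC.congr hfw⟩
  refine ⟨hC2, ?_, ?_, ?_, ?_⟩
  · -- periodicity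
    intro t x
    rw [hu, hu]
    congr 1
    apply intervalIntegral.integral_congr
    intro ξ _
    show (v₁ (t + 2 * π) ξ - v₂ (t + 2 * π) ξ) / a ξ = (v₁ t ξ - v₂ t ξ) / a ξ
    rw [(hper t ξ).1, (hper t ξ).2]
  · -- the PDE
    intro t x hx
    have hax : a x ≠ 0 := ne_of_gt (hUa x (hIccU hx))
    have h1 : (fun s => deriv (fun s' => u s' x) s) = fun s => (v₁ s x + v₂ s x) / 2 :=
      funext fun s => (hut s x hx).deriv
    have h2 : deriv (fun s => deriv (fun s' => u s' x) s) t
        = (deriv (fun s => v₁ s x) t + deriv (fun s => v₂ s x) t) / 2 := by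
      rw [h1]
      exact (((hD1t t x).add (hD2t t x)).div_const 2).deriv
    have h3 : deriv (fun y => u t y) x = g (t, x) / 2 := (hux t x (hIccU hx)).deriv
    have h4 : deriv (fun y => deriv (fun y' => u t y') y) x
        = ((deriv (fun y => v₁ t y) x - deriv (fun y => v₂ t y) x) * a x
          - (v₁ t x - v₂ t x) * deriv a x) / (a x)^2 / 2 := by
      have heq : (fun y => deriv (fun y' => u t y') y) =ᶠ[nhds x] (fun y => g (t, y) / 2) :=
        Filter.eventuallyEq_of_mem (hUopen.mem_nhds (hIccU hx)) (fun y hy => (hux t y hy).deriv)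
      rw [heq.deriv_eq]
      have hg' : HasDerivAt (fun y => g (t, y))
          (((deriv (fun y => v₁ t y) x - deriv (fun y => v₂ t y) x) * a x
            - (v₁ t x - v₂ t x) * deriv a x) / (a x)^2) x := by
        have hnum : HasDerivAt (fun y => v₁ t y - v₂ t y)
            (deriv (fun y => v₁ t y) x - deriv (fun y => v₂ t y) x) x :=
          (hD1x t x).sub (hD2x t x)
        have hden : HasDerivAt a (deriv a x) x := (ha.differentiable one_ne_zero x).hasDerivAt
        exact hnum.div hden hax
      exact (hg'.div_const 2).deriv
    have h5 : deriv (fun s => u s x) t = (v₁ t x + v₂ t x) / 2 := (hut t x hx).deriv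
    have hgx2 : g (t, x) / 2 = (v₁ t x - v₂ t x) / (2 * a x) := by
      rw [show g (t, x) = (v₁ t x - v₂ t x) / a x from rfl, div_div, mul_comm (a x) 2]
    rw [h2, h3, h4, h5, hu t x, hgx2]
    have e1 := (hsys t x hx).1
    have e2 := (hsys t x hx).2
    have hc : (a x)^2 * (((deriv (fun y => v₁ t y) x - deriv (fun y => v₂ t y) x) * a x
        - (v₁ t x - v₂ t x) * deriv a x) / (a x)^2 / 2)
        = ((deriv (fun y => v₁ t y) x - deriv (fun y => v₂ t y) x) * a x
          - (v₁ t x - v₂ t x) * deriv a x) / 2 := by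
      field_simp
    rw [hc]
    linear_combination e1 / 2 + e2 / 2
  · -- Dirichlet boundary condition
    intro t
    rw [hu t 0, intervalIntegral.integral_same, mul_zero]
  · -- Neumann boundary condition
    intro t
    have h1U : (1:ℝ) ∈ U := hIccU ⟨zero_le_one, le_rfl⟩
    rw [(hux t 1 h1U).deriv, show g (t, 1) = (v₁ t 1 - v₂ t 1) / a 1 from rfl, (hbc t).2]
    simp
end
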